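/- Let $k \in \mathbb{N}$, let $A_1, \dots, A_k \subset \mathbb{R}^d$ be finite non-empty sets, let $H \subseteq \mathbb{R}^d$ be a hyperplane containing $0$, and let $\vec{v} \in \mathbb{R}^d$ be a vector not parallel to $H$. Then $\mathcal{C}_{H,\vec{v}}(A_1 + \dots + A_k) \supseteq \mathcal{C}_{H,\vec{v}}(A_1) + \dots + \mathcal{C}_{H,\vec{v}}(A_k)$; in particular $|A_1 + \dots + A_k| \geq |\mathcal{C}_{H,\vec{v}}(A_1) + \dots + \mathcal{C}_{H,\vec{v}}(A_k)|$. -/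

import Mathlib

open scoped Pointwise

/-- The fiber of `A` over `u` in the direction `v`: points of `A` lying on the line
through `u` with direction `v`. -/
def fiber {d : ℕ} (v : Fin d → ℝ) (A : Set (Fin d → ℝ)) (u : Fin d → ℝ) :
    Set (Fin d → ℝ) :=
  {a ∈ A | ∃ x : ℝ, a + x • v = u}

/-- The compression of `A` onto the hyperplane `H` with respect to `v`: its fiber over
each `u ∈ H` is `{u + n • v : 0 ≤ n ≤ |A_u| - 1}`. -/
noncomputable def compress {d : ℕ} (H : Submodule ℝ (Fin d → ℝ)) (v : Fin d → ℝ)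
    (A : Set (Fin d → ℝ)) : Set (Fin d → ℝ) :=
  {p | ∃ u ∈ H, ∃ n : ℕ, n < (fiber v A u).ncard ∧ p = u + (n : ℝ) • v}



/-- The set of parameters `x` with `u - x • v ∈ B`. -/
def lineSet {d : ℕ} (v : Fin d → ℝ) (B : Set (Fin d → ℝ)) (u : Fin d → ℝ) : Set ℝ :=
  {x | u - x • v ∈ B}

section helpers
variable {d : ℕ} {v : Fin d → ℝ} {H : Submodule ℝ (Fin d → ℝ)}

lemma vne (hv : v ∉ H) : v ≠ 0 := fun h => hv (h ▸ H.zero_mem)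

lemma phi_inj (hv0 : v ≠ 0) (u : Fin d → ℝ) :
    Function.Injective (fun x : ℝ => u - x • v) := by
  intro x y h
  simp only [sub_right_inj] at h
  exact smul_left_injective ℝ hv0 h

lemma decomp_unique (hv : v ∉ H) {u u' : Fin d → ℝ} (hu : u ∈ H) (hu' : u' ∈ H)
    {x y : ℝ} (h : u + x • v = u' + y • v) : u = u' ∧ x = y := by
  have hxy : x = y := by
    by_contra hne
    have h2 : (x - y) • v = u' - u := by
      rw [sub_smul]; rw [add_comm, add_comm u'] at h
      linear_combination (norm := module) h
    have : v = (x - y)⁻¹ • (u' - u) := by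
      rw [← h2, smul_smul, inv_mul_cancel₀ (sub_ne_zero.2 hne), one_smul]
    exact hv (this ▸ H.smul_mem _ (H.sub_mem hu' hu))
  subst hxy
  exact ⟨by simpa using h, rfl⟩

lemma fiber_eq (B : Set (Fin d → ℝ)) (u : Fin d → ℝ) :
    fiber v B u = (fun x : ℝ => u - x • v) '' lineSet v B u := by
  ext a
  constructor
  · rintro ⟨ha, x, hx⟩
    exact ⟨x, by simpa [lineSet, ← hx] using ha, by rw [← hx]; module⟩
  · rintro ⟨x, hx, rfl⟩
    exact ⟨hx, x, by module⟩

lemma fiber_ncard (hv0 : v ≠ 0) (B : Set (Fin d → ℝ)) (u : Fin d → ℝ) :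
    (fiber v B u).ncard = (lineSet v B u).ncard := by
  rw [fiber_eq, Set.ncard_image_of_injective _ (phi_inj hv0 u)]

lemma lineSet_finite (hv0 : v ≠ 0) {B : Set (Fin d → ℝ)} (hB : B.Finite) (u : Fin d → ℝ) :
    (lineSet v B u).Finite :=
  hB.preimage ((phi_inj hv0 u).injOn)

end helpers

section sums
variable {ι M : Type*} [AddCommMonoid M]

lemma sum_sets_finite (s : Finset ι) (X : ι → Set M) (h : ∀ i ∈ s, (X i).Finite) :
    (∑ i ∈ s, X i).Finite := by
  classical
  induction s using Finset.induction with
  | empty => rw [Finset.sum_empty]; exact Set.finite_singleton 0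
  | @insert j s hjs ih =>
    rw [Finset.sum_insert hjs]
    exact (h j (Finset.mem_insert_self _ _)).add
      (ih fun i hi => h i (Finset.mem_insert_of_mem hi))

lemma sum_sets_nonempty (s : Finset ι) (X : ι → Set M) (h : ∀ i ∈ s, (X i).Nonempty) :
    (∑ i ∈ s, X i).Nonempty := by
  classical
  induction s using Finset.induction with
  | empty => exact ⟨0, rfl⟩
  | @insert j s hjs ih =>
    rw [Finset.sum_insert hjs]
    exact (h j (Finset.mem_insert_self _ _)).add
      (ih fun i hi => h i (Finset.mem_insert_of_mem hi))

end sums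

lemma two_set_card {X Y : Set ℝ} (hX : X.Finite) (hY : Y.Finite)
    (hXne : X.Nonempty) (hYne : Y.Nonempty) :
    X.ncard + Y.ncard ≤ (X + Y).ncard + 1 := by
  classical
  have hcoe : X + Y = ↑(hX.toFinset + hY.toFinset) := by
    rw [Finset.coe_add, hX.coe_toFinset, hY.coe_toFinset]
  have h1 : (X + Y).ncard = (hX.toFinset + hY.toFinset).card := by
    rw [hcoe, Set.ncard_coe_finset]
  have h2 : X.ncard = hX.toFinset.card := Set.ncard_eq_toFinset_card _ _
  have h3 : Y.ncard = hY.toFinset.card := Set.ncard_eq_toFinset_card _ _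
  have hne1 : hX.toFinset.Nonempty := by simpa using hXne
  have hne2 : hY.toFinset.Nonempty := by simpa using hYne
  have := cauchy_davenport_add_of_linearOrder_isCancelAdd hne1 hne2
  omega

lemma real_sum_card {ι : Type*} (s : Finset ι) (X : ι → Set ℝ)
    (hfin : ∀ i ∈ s, (X i).Finite) (hne : ∀ i ∈ s, (X i).Nonempty) :
    ∑ i ∈ s, (X i).ncard + 1 ≤ (∑ i ∈ s, X i).ncard + s.card := by
  classical
  induction s using Finset.induction with
  | empty =>
    rw [Finset.sum_empty, Finset.sum_empty, Finset.card_empty]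
    have : ((0 : Set ℝ)).ncard = 1 := by
      rw [show (0 : Set ℝ) = {0} from rfl, Set.ncard_singleton]
    omega
  | @insert j s hjs ih =>
    rw [Finset.sum_insert hjs, Finset.sum_insert hjs, Finset.card_insert_of_notMem hjs]
    have hfin' : ∀ i ∈ s, (X i).Finite := fun i hi => hfin i (Finset.mem_insert_of_mem hi)
    have hne' : ∀ i ∈ s, (X i).Nonempty := fun i hi => hne i (Finset.mem_insert_of_mem hi)
    have hrec := ih hfin' hne'
    have hts := two_set_card (hfin j (Finset.mem_insert_self _ _))
      (sum_sets_finite s X hfin') (hne j (Finset.mem_insert_self _ _))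
      (sum_sets_nonempty s X hne')
    omega

lemma lineSet_sum_subset {d : ℕ} {v : Fin d → ℝ} {ι : Type*} (s : Finset ι)
    (A : ι → Set (Fin d → ℝ)) (u : ι → Fin d → ℝ) :
    (∑ i ∈ s, lineSet v (A i) (u i)) ⊆ lineSet v (∑ i ∈ s, A i) (∑ i ∈ s, u i) := by
  intro x hx
  rw [Set.mem_finset_sum] at hx
  obtain ⟨g, hg, rfl⟩ := hx
  show (∑ i ∈ s, u i) - (∑ i ∈ s, g i) • v ∈ ∑ i ∈ s, A i
  have : (∑ i ∈ s, u i) - (∑ i ∈ s, g i) • v = ∑ i ∈ s, (u i - g i • v) := by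
    rw [Finset.sum_smul, ← Finset.sum_sub_distrib]
  rw [this]
  exact Set.finset_sum_mem_finset_sum s A _ fun i hi => hg hi

lemma compress_finite_and_card_le {d : ℕ} (H : Submodule ℝ (Fin d → ℝ)) (v : Fin d → ℝ)
    (hv : v ∉ H) {B : Set (Fin d → ℝ)} (hB : B.Finite) :
    (compress H v B).Finite ∧ (compress H v B).ncard ≤ B.ncard := by
  classical
  have hv0 : v ≠ 0 := vne hv
  have hXfin : ∀ u, (lineSet v B u).Finite := lineSet_finite hv0 hB
  set L : (Fin d → ℝ) → List ℝ := fun u => (hXfin u).toFinset.sort (· ≤ ·) with hLdef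
  have hlen : ∀ u, (L u).length = (lineSet v B u).ncard := by
    intro u
    rw [hLdef]
    rw [Finset.length_sort, Set.ncard_eq_toFinset_card _ (hXfin u)]
  set f : (Fin d → ℝ) → (Fin d → ℝ) := fun p =>
    if h : ∃ u, u ∈ H ∧ ∃ n : ℕ, n < (fiber v B u).ncard ∧ p = u + (n : ℝ) • v then
      h.choose - ((L h.choose).getD h.choose_spec.2.choose 0) • v
    else p with hfdef
  have hf : ∀ p : Fin d → ℝ, ∀ u ∈ H, ∀ n : ℕ, n < (fiber v B u).ncard → p = u + (n:ℝ) • v →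
      f p = u - ((L u).getD n 0) • v := by
    intro p u hu n hn hp
    have hex : ∃ u, u ∈ H ∧ ∃ n : ℕ, n < (fiber v B u).ncard ∧ p = u + (n : ℝ) • v :=
      ⟨u, hu, n, hn, hp⟩
    rw [hfdef]
    simp only [dif_pos hex]
    have hu' := hex.choose_spec.1
    have hspec := hex.choose_spec.2.choose_spec
    have heq : hex.choose + (hex.choose_spec.2.choose : ℝ) • v = u + (n : ℝ) • v :=
      hspec.2.symm.trans hp
    obtain ⟨hue, hne⟩ := decomp_unique hv hu' hu heq
    have hnn : hex.choose_spec.2.choose = n := Nat.cast_injective hne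
    have hgen : ∀ (w : Fin d → ℝ) (m : ℕ), w = u → m = n →
        w - ((L w).getD m 0) • v = u - ((L u).getD n 0) • v := by
      rintro w m rfl rfl; rfl
    exact hgen _ _ hue hnn
  have hidx : ∀ (u : Fin d → ℝ) (n : ℕ), n < (fiber v B u).ncard → n < (L u).length := by
    intro u n hn
    rw [hlen, ← fiber_ncard hv0]
    exact hn
  have hmem : ∀ (u : Fin d → ℝ) (n : ℕ) (hn : n < (fiber v B u).ncard),
      (L u).getD n 0 ∈ lineSet v B u := by
    intro u n hn
    have hn' := hidx u n hn
    rw [List.getD_eq_getElem _ _ hn']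
    have h1 : (L u)[n] ∈ L u := List.getElem_mem _
    have h2 := (Finset.mem_sort (α := ℝ) (· ≤ ·)).1 h1
    exact (Set.Finite.mem_toFinset _).1 h2
  have hmaps : ∀ p ∈ compress H v B, f p ∈ B := by
    rintro p ⟨u, hu, n, hn, rfl⟩
    rw [hf _ u hu n hn rfl]
    exact hmem u n hn
  have hinj : Set.InjOn f (compress H v B) := by
    rintro p ⟨up, hup, np, hnp, rfl⟩ q ⟨uq, huq, nq, hnq, rfl⟩ hpq
    rw [hf _ up hup np hnp rfl, hf _ uq huq nq hnq rfl] at hpq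
    have h' : up + (-((L up).getD np 0)) • v = uq + (-((L uq).getD nq 0)) • v := by
      simpa [sub_eq_add_neg, neg_smul] using hpq
    obtain ⟨hueq, hxeq⟩ := decomp_unique hv hup huq h'
    subst hueq
    have hxeq' : (L up).getD np 0 = (L up).getD nq 0 := neg_inj.1 hxeq
    have hlp := hidx up np hnp
    have hlq := hidx up nq hnq
    rw [List.getD_eq_getElem _ _ hlp, List.getD_eq_getElem _ _ hlq] at hxeq'
    have hnd : (L up).Nodup := Finset.sort_nodup _ _
    have : np = nq := (hnd.getElem_inj_iff).1 hxeq'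
    rw [this]
  have himg : (f '' compress H v B).Finite :=
    hB.subset (by rintro _ ⟨p, hp, rfl⟩; exact hmaps p hp)
  exact ⟨Set.Finite.of_finite_image himg hinj,
    Set.ncard_le_ncard_of_injOn f hmaps hinj hB⟩

/-- Compressions do not increase sumsets:
`𝓒(A₁) + ⋯ + 𝓒(A_k) ⊆ 𝓒(A₁ + ⋯ + A_k)`, and in particular
`|𝓒(A₁) + ⋯ + 𝓒(A_k)| ≤ |A₁ + ⋯ + A_k|`. -/
theorem stmt_6 (d k : ℕ) (A : Fin k → Set (Fin d → ℝ))
    (hfin : ∀ i, (A i).Finite) (hne : ∀ i, (A i).Nonempty)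
    (H : Submodule ℝ (Fin d → ℝ)) (hH : Module.finrank ℝ H = d - 1)
    (v : Fin d → ℝ) (hv : v ∉ H) :
    (∑ i, compress H v (A i)) ⊆ compress H v (∑ i, A i) ∧
    (∑ i, compress H v (A i)).ncard ≤ (∑ i, A i).ncard := by
  classical
  have hv0 : v ≠ 0 := vne hv
  have hsub : (∑ i, compress H v (A i)) ⊆ compress H v (∑ i, A i) := by
    intro p hp
    rw [Set.mem_finset_sum] at hp
    obtain ⟨g, hg, rfl⟩ := hp
    have hgi : ∀ i, ∃ u, u ∈ H ∧ ∃ n : ℕ, n < (fiber v (A i) u).ncard ∧ g i = u + (n:ℝ) • v :=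
      fun i => hg (Finset.mem_univ i)
    choose u huH n hn hgeq using hgi
    refine ⟨∑ i, u i, Submodule.sum_mem H (fun i _ => huH i), ∑ i, n i, ?_, ?_⟩
    · rw [fiber_ncard hv0]
      have hn' : ∀ i, n i < (lineSet v (A i) (u i)).ncard := fun i => by
        rw [← fiber_ncard hv0]; exact hn i
      have hLfin : ∀ i ∈ Finset.univ, (lineSet v (A i) (u i)).Finite :=
        fun i _ => lineSet_finite hv0 (hfin i) (u i)
      have hLne : ∀ i ∈ Finset.univ, (lineSet v (A i) (u i)).Nonempty := fun i _ =>
        Set.nonempty_of_ncard_ne_zero (by have := hn' i; omega)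
      have hsum := real_sum_card Finset.univ _ hLfin hLne
      have h1 : ∑ i, (n i + 1) ≤ ∑ i, (lineSet v (A i) (u i)).ncard :=
        Finset.sum_le_sum fun i _ => hn' i
      rw [Finset.sum_add_distrib, Finset.sum_const, smul_eq_mul, mul_one] at h1
      have hsubL := lineSet_sum_subset (v := v) Finset.univ A u
      have hfinBig : (lineSet v (∑ i, A i) (∑ i, u i)).Finite :=
        lineSet_finite hv0 (sum_sets_finite _ _ fun i _ => hfin i) _
      have hle := Set.ncard_le_ncard hsubL hfinBig
      have hcard : (Finset.univ : Finset (Fin k)).card = k := by simp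
      omega
    · calc ∑ i, g i = ∑ i, (u i + (n i : ℝ) • v) := Finset.sum_congr rfl fun i _ => hgeq i
        _ = (∑ i, u i) + ((∑ i, n i : ℕ) : ℝ) • v := by
            rw [Finset.sum_add_distrib, ← Finset.sum_smul, Nat.cast_sum]
  have hBfin : (∑ i, A i).Finite := sum_sets_finite _ _ fun i _ => hfin i
  obtain ⟨hcfin, hcle⟩ := compress_finite_and_card_le H v hv hBfin
  exact ⟨hsub, le_trans (Set.ncard_le_ncard hsub hcfin) hcle⟩
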